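/- (Existence of ROCN matrices with prescribed row norms.) Let m ≤ n be positive integers and let H_1,…,H_m be strictly positive real numbers with Σ_{i=1}^m H_i² = n. Then there exists an m×n ROCN matrix h such that Σ_{j=1}^n h_{ij}² = H_i² for every i ∈ {1,…,m}. In particular, whenever the H_i are not all equal to √(n/m), this produces an ROCN matrix that is not semi-orthogonal (hence an ROCN Bell inequality that is not Platonic). -/
import Mathlib


open Matrix Finset

/-- An `m × n` real matrix `h` (with `m ≤ n`) is ROCN (row-orthogonal, column-normalized)
if all its rows are nonzero, its rows are pairwise orthogonal, and every column has
unit Euclidean norm. -/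
def IsROCN {m n : ℕ} (h : Matrix (Fin m) (Fin n) ℝ) : Prop :=
  m ≤ n ∧
  (∀ i, ∃ j, h i j ≠ 0) ∧
  (∀ i k, i ≠ k → ∑ j, h i j * h k j = 0) ∧
  (∀ j, ∑ i, (h i j) ^ 2 = 1)

lemma rotate_cols {m n : ℕ} (v : Fin n → Fin m → ℝ) (p q : Fin n) (hpq : p ≠ q)
    (h1 : ∑ i, (v p i)^2 ≤ 1) (h2 : (1:ℝ) ≤ ∑ i, (v q i)^2) :
    ∃ w : Fin n → Fin m → ℝ,
      (∀ j, j ≠ p → j ≠ q → w j = v j) ∧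
      (∀ i i', w p i * w p i' + w q i * w q i' = v p i * v p i' + v q i * v q i') ∧
      (∑ i, (w q i)^2 = 1) := by
  set f : ℝ → ℝ := fun θ => ∑ i, (Real.sin θ * v p i + Real.cos θ * v q i)^2 with hf
  have hc : Continuous f := by
    apply continuous_finset_sum
    intro i _
    fun_prop
  have h0 : f 0 = ∑ i, (v q i)^2 := by simp [hf]
  have hpi2 : f (Real.pi/2) = ∑ i, (v p i)^2 := by simp [hf]
  have hmem : (1:ℝ) ∈ Set.uIcc (f 0) (f (Real.pi/2)) := by
    rw [h0, hpi2, Set.mem_uIcc]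
    right
    exact ⟨h1, h2⟩
  obtain ⟨θ, _, hθ⟩ := intermediate_value_uIcc hc.continuousOn hmem
  refine ⟨fun j => if j = p then (fun i => Real.cos θ * v p i - Real.sin θ * v q i)
      else if j = q then (fun i => Real.sin θ * v p i + Real.cos θ * v q i) else v j,
      ?_, ?_, ?_⟩
  · intro j hjp hjq
    simp [hjp, hjq]
  · intro i i'
    simp only [if_pos rfl, if_neg hpq.symm, if_neg hpq, ite_true, if_true]
    have hs := Real.sin_sq_add_cos_sq θ
    linear_combination (v p i * v p i' + v q i * v q i') * hs
  · simp only [if_neg hpq.symm, if_pos rfl, ite_true, if_true]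
    exact hθ

lemma equalize {m n : ℕ} (c : Fin m → ℝ) :
    ∀ (k : ℕ) (S : Finset (Fin n)) (v : Fin n → Fin m → ℝ),
      S.card = k →
      (∀ i i', ∑ j, v j i * v j i' = if i = i' then c i else 0) →
      (∀ j, j ∉ S → ∑ i, (v j i)^2 = 1) →
      (∑ j ∈ S, ∑ i, (v j i)^2 = (S.card : ℝ)) →
      ∃ w : Fin n → Fin m → ℝ,
        (∀ i i', ∑ j, w j i * w j i' = if i = i' then c i else 0) ∧
        (∀ j, ∑ i, (w j i)^2 = 1) := by
  intro k
  induction k with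
  | zero =>
    intro S v hcard horth hout _
    exact ⟨v, horth, fun j => hout j (by simp [Finset.card_eq_zero.mp hcard])⟩
  | succ k ih =>
    intro S v hcard horth hout hsumS
    by_cases hall : ∀ j ∈ S, ∑ i, (v j i)^2 = 1
    · exact ⟨v, horth, fun j => if hj : j ∈ S then hall j hj else hout j hj⟩
    push_neg at hall
    obtain ⟨q0, hq0S, hq0⟩ := hall
    -- produce p' q' ∈ S, p' ≠ q', colnorm p' ≤ 1 ≤ colnorm q'
    have hkey : ∃ p' q', p' ∈ S ∧ q' ∈ S ∧ p' ≠ q' ∧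
        (∑ i, (v p' i)^2 ≤ 1) ∧ ((1:ℝ) ≤ ∑ i, (v q' i)^2) := by
      have herase : ∑ j ∈ S.erase q0, ∑ i, (v j i)^2
          = (S.card : ℝ) - ∑ i, (v q0 i)^2 := by
        rw [← hsumS]
        exact Finset.sum_erase_eq_sub hq0S
      have hcarde : ((S.erase q0).card : ℝ) = (S.card : ℝ) - 1 := by
        rw [Finset.card_erase_of_mem hq0S]
        have : 1 ≤ S.card := Finset.card_pos.mpr ⟨q0, hq0S⟩
        push_cast [Nat.cast_sub this]
        ring
      rcases lt_or_gt_of_ne hq0 with hlt | hgt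
      · -- colnorm q0 < 1 ; find q' in erase with 1 < colnorm
        have hlt2 : ∑ j ∈ S.erase q0, (1:ℝ) < ∑ j ∈ S.erase q0, ∑ i, (v j i)^2 := by
          rw [herase, Finset.sum_const, nsmul_eq_mul, mul_one, hcarde]
          linarith
        obtain ⟨q', hq'e, hq'⟩ := Finset.exists_lt_of_sum_lt hlt2
        exact ⟨q0, q', hq0S, Finset.mem_of_mem_erase hq'e,
          (Finset.ne_of_mem_erase hq'e).symm, le_of_lt hlt, le_of_lt hq'⟩
      · have hlt2 : ∑ j ∈ S.erase q0, ∑ i, (v j i)^2 < ∑ j ∈ S.erase q0, (1:ℝ) := by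
          rw [herase, Finset.sum_const, nsmul_eq_mul, mul_one, hcarde]
          linarith
        obtain ⟨p', hp'e, hp'⟩ := Finset.exists_lt_of_sum_lt hlt2
        exact ⟨p', q0, Finset.mem_of_mem_erase hp'e, hq0S,
          Finset.ne_of_mem_erase hp'e, le_of_lt hp', le_of_lt hgt⟩
    obtain ⟨p', q', hp'S, hq'S, hne, hple, hqge⟩ := hkey
    obtain ⟨w, hwfix, hpair, hwq⟩ := rotate_cols v p' q' hne hple hqge
    -- pair sums of squares preserved
    have hpairsq : ∑ i, (w p' i)^2 + ∑ i, (w q' i)^2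
        = ∑ i, (v p' i)^2 + ∑ i, (v q' i)^2 := by
      have : ∀ i : Fin m, (w p' i)^2 + (w q' i)^2 = (v p' i)^2 + (v q' i)^2 := by
        intro i
        have := hpair i i
        nlinarith [this]
      rw [← Finset.sum_add_distrib, ← Finset.sum_add_distrib]
      exact Finset.sum_congr rfl fun i _ => this i
    -- orthogonality preserved
    have horth' : ∀ i i', ∑ j, w j i * w j i' = if i = i' then c i else 0 := by
      intro i i'
      rw [← horth i i']
      have hzero : ∀ x ∈ (Finset.univ : Finset (Fin n)), x ∉ ({p', q'} : Finset (Fin n)) →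
          w x i * w x i' - v x i * v x i' = 0 := by
        intro x _ hx
        simp only [Finset.mem_insert, Finset.mem_singleton, not_or] at hx
        rw [hwfix x hx.1 hx.2]
        ring
      have hsub : ∑ j ∈ ({p', q'} : Finset (Fin n)), (w j i * w j i' - v j i * v j i')
          = ∑ j, (w j i * w j i' - v j i * v j i') :=
        Finset.sum_subset (Finset.subset_univ _) hzero
      have hpairz : ∑ j ∈ ({p', q'} : Finset (Fin n)), (w j i * w j i' - v j i * v j i') = 0 := by
        rw [Finset.sum_pair hne]
        have := hpair i i'
        linarith
      have : ∑ j, (w j i * w j i' - v j i * v j i') = 0 := by rw [← hsub, hpairz]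
      rw [Finset.sum_sub_distrib] at this
      linarith
    -- apply IH to S.erase q'
    have hcard' : (S.erase q').card = k := by
      rw [Finset.card_erase_of_mem hq'S, hcard]
      omega
    refine ih (S.erase q') w hcard' horth' ?_ ?_
    · intro j hj
      rcases em (j = q') with hjq | hjq
      · rw [hjq]; exact hwq
      · have hjS : j ∉ S := by
          intro hjS
          exact hj (Finset.mem_erase.mpr ⟨hjq, hjS⟩)
        have hjp : j ≠ p' := fun h => hjS (h ▸ hp'S)
        rw [hwfix j hjp hjq]
        exact hout j hjS
    · -- sum over erase
      have hSsum : ∑ j ∈ S, ∑ i, (w j i)^2 = ∑ j ∈ S, ∑ i, (v j i)^2 := by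
        have hzero : ∀ x ∈ S, x ∉ ({p', q'} : Finset (Fin n)) →
            (∑ i, (w x i)^2) - ∑ i, (v x i)^2 = 0 := by
          intro x _ hx
          simp only [Finset.mem_insert, Finset.mem_singleton, not_or] at hx
          rw [hwfix x hx.1 hx.2]
          ring
        have hsubset : ({p', q'} : Finset (Fin n)) ⊆ S := by
          intro x hx
          simp only [Finset.mem_insert, Finset.mem_singleton] at hx
          rcases hx with h | h
          · exact h ▸ hp'S
          · exact h ▸ hq'S
        have hsub : ∑ j ∈ ({p', q'} : Finset (Fin n)), ((∑ i, (w j i)^2) - ∑ i, (v j i)^2)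
            = ∑ j ∈ S, ((∑ i, (w j i)^2) - ∑ i, (v j i)^2) :=
          Finset.sum_subset hsubset hzero
        have hpairz : ∑ j ∈ ({p', q'} : Finset (Fin n)), ((∑ i, (w j i)^2) - ∑ i, (v j i)^2) = 0 := by
          rw [Finset.sum_pair hne]
          linarith
        have : ∑ j ∈ S, ((∑ i, (w j i)^2) - ∑ i, (v j i)^2) = 0 := by rw [← hsub, hpairz]
        rw [Finset.sum_sub_distrib] at this
        linarith
      have herase : ∑ j ∈ S.erase q', ∑ i, (w j i)^2
          = (∑ j ∈ S, ∑ i, (w j i)^2) - ∑ i, (w q' i)^2 :=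
        Finset.sum_erase_eq_sub hq'S
      rw [herase, hSsum, hsumS, hwq, hcard', hcard]
      push_cast
      try ring_nf
      try omega

/-- (Existence of ROCN matrices with prescribed row norms.) Let
`0 < m ≤ n` and let `H₁, …, H_m > 0` satisfy `Σᵢ Hᵢ² = n`. Then there is an `m × n`
ROCN matrix `h` with `Σⱼ hᵢⱼ² = Hᵢ²` for every `i`. In particular, whenever the `Hᵢ²`
are not all equal to `n/m`, this produces an ROCN matrix that is not semi-orthogonal
(hence an ROCN Bell inequality that is not Platonic). -/
theorem rocn_exists_with_row_norms {m n : ℕ} (hm : 0 < m) (hmn : m ≤ n)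
    (H : Fin m → ℝ) (hpos : ∀ i, 0 < H i)
    (hsum : ∑ i, (H i) ^ 2 = (n : ℝ)) :
    ∃ h : Matrix (Fin m) (Fin n) ℝ, IsROCN h ∧
      (∀ i, ∑ j, (h i j) ^ 2 = (H i) ^ 2) ∧
      ((∃ i, (H i) ^ 2 ≠ (n : ℝ) / m) → ¬ ∀ i, ∑ j, (h i j) ^ 2 = (n : ℝ) / m) := by
  classical
  set v : Fin n → Fin m → ℝ := fun j i => if (j : ℕ) = (i : ℕ) then H i else 0 with hv
  have horth : ∀ i i', ∑ j, v j i * v j i' = if i = i' then (H i)^2 else 0 := by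
    intro i i'
    by_cases hii : i = i'
    · subst hii
      rw [if_pos rfl]
      rw [Finset.sum_eq_single (⟨(i : ℕ), lt_of_lt_of_le i.2 hmn⟩ : Fin n)]
      · simp [hv, sq]
      · intro b _ hb
        have hbv : (b : ℕ) ≠ (i : ℕ) := by
          intro h
          apply hb
          exact Fin.ext h
        simp [hv, hbv]
      · simp
    · rw [if_neg hii]
      apply Finset.sum_eq_zero
      intro j _
      simp only [hv]
      by_cases h1 : (j : ℕ) = (i : ℕ)
      · have h2 : (j : ℕ) ≠ (i' : ℕ) := by
          intro h
          exact hii (Fin.ext (h1.symm.trans h : (i : ℕ) = (i' : ℕ)))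
        rw [if_pos h1, if_neg h2]
        ring
      · rw [if_neg h1]
        ring
  have hrow : ∀ i : Fin m, ∑ j, (v j i)^2 = (H i)^2 := by
    intro i
    have h := horth i i
    rw [if_pos rfl] at h
    rw [← h]
    exact Finset.sum_congr rfl fun j _ => sq (v j i) ▸ rfl
  have hsumS : ∑ j ∈ (Finset.univ : Finset (Fin n)), ∑ i, (v j i)^2
      = (((Finset.univ : Finset (Fin n)).card : ℕ) : ℝ) := by
    rw [Finset.sum_comm]
    rw [Finset.sum_congr rfl fun i _ => hrow i]
    simpa using hsum
  obtain ⟨w, hworth, hwcol⟩ := equalize (fun i => (H i)^2)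
    (Finset.univ : Finset (Fin n)).card Finset.univ v rfl horth (by simp) hsumS
  have hwrow : ∀ i : Fin m, ∑ j, (w j i)^2 = (H i)^2 := by
    intro i
    have h := hworth i i
    rw [if_pos rfl] at h
    rw [← h]
    exact Finset.sum_congr rfl fun j _ => sq (w j i) ▸ rfl
  refine ⟨fun i j => w j i, ⟨hmn, ?_, ?_, ?_⟩, ?_, ?_⟩
  · intro i
    by_contra hno
    push_neg at hno
    have : ∑ j, (w j i)^2 = 0 := Finset.sum_eq_zero fun j _ => by rw [hno j]; ring
    have := hwrow i
    nlinarith [hpos i, sq_nonneg (H i)]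
  · intro i k hik
    have h := hworth i k
    rw [if_neg hik] at h
    exact h
  · exact hwcol
  · exact hwrow
  · rintro ⟨i, hi⟩ hall
    exact hi ((hwrow i).symm.trans (hall i))
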